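/- After processing any finite sequence of packets through the pipeline insertion process starting from an all-zero table, no (ID, count) pair with positive count appears in two distinct positions of the table. -/

import Mathlib

section LexPipeline

variable {ID Idx : Type} [LinearOrder ID] [DecidableEq Idx]

/-- One pipeline stage with lexicographic `(count, ID)` comparison.  An active packet
`p` at vector `n` looks at position `h n p.1`: if `p` is lexicographically strictly
greater than the stored pair it writes itself there and carries forward the evicted
pair; if it is strictly smaller it continues unchanged; if the pairs are identical the
packet stops (becomes inactive). -/
def lexStep (h : ℕ → ID → Idx) (n : ℕ)
    (st : (ℕ → Idx → ID × ℕ) × Option (ID × ℕ)) :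
    (ℕ → Idx → ID × ℕ) × Option (ID × ℕ) :=
  match st with
  | (T, none) => (T, none)
  | (T, some p) =>
    let s := T n (h n p.1)
    if s.2 < p.2 ∨ (s.2 = p.2 ∧ s.1 < p.1) then
      ((fun i j => if i = n ∧ j = h n p.1 then p else T i j), some s)
    else if s = p then (T, none)
    else (T, some p)

/-- State after an inserted packet has traversed the first `n` vectors. -/
def lexRun (h : ℕ → ID → Idx) (T : ℕ → Idx → ID × ℕ) (p : ID × ℕ) :
    ℕ → (ℕ → Idx → ID × ℕ) × Option (ID × ℕ)
  | 0 => (T, some p)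
  | n + 1 => lexStep h n (lexRun h T p n)

/-- Table resulting from inserting packet `p` through all `d` vectors. -/
def lexInsert (h : ℕ → ID → Idx) (d : ℕ) (T : ℕ → Idx → ID × ℕ) (p : ID × ℕ) :
    ℕ → Idx → ID × ℕ :=
  (lexRun h T p d).1

/-- Table after processing a sequence of packets one after another. -/
def lexTableAfter (h : ℕ → ID → Idx) (d : ℕ) (T₀ : ℕ → Idx → ID × ℕ)
    (l : List (ID × ℕ)) : ℕ → Idx → ID × ℕ :=
  l.foldl (lexInsert h d) T₀

end LexPipeline

section LexProof

variable {ID Idx : Type} [LinearOrder ID] [DecidableEq Idx]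

/-- Lexicographic key `(count, ID)`. -/
def lexKey (p : ID × ℕ) : ℕ ×ₗ ID := toLex (p.2, p.1)

lemma lexKey_lt_iff {s p : ID × ℕ} :
    lexKey s < lexKey p ↔ (s.2 < p.2 ∨ (s.2 = p.2 ∧ s.1 < p.1)) := by
  simpa [lexKey] using (Prod.Lex.lt_iff : toLex (s.2, s.1) < toLex (p.2, p.1) ↔ _)

lemma lexKey_inj {s p : ID × ℕ} (hk : lexKey s = lexKey p) : s = p := by
  have h' : (s.2, s.1) = (p.2, p.1) := by simpa [lexKey] using hk
  have h1 : s.2 = p.2 := congrArg Prod.fst h'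
  have h2 : s.1 = p.1 := congrArg Prod.snd h'
  exact Prod.ext h2 h1

/-- Path invariant: every positive entry at stage `m` is stored at its own hash slot,
and the entries on its hash path at earlier stages are strictly larger. -/
def PInv (h : ℕ → ID → Idx) (T : ℕ → Idx → ID × ℕ) : Prop :=
  ∀ m j, 0 < (T m j).2 → j = h m (T m j).1 ∧
    ∀ r < m, lexKey (T m j) < lexKey (T r (h r (T m j).1))

/-- Mid-run invariant: path invariant plus the condition on a positive carried pair. -/
def CInv (h : ℕ → ID → Idx) (n : ℕ)
    (st : (ℕ → Idx → ID × ℕ) × Option (ID × ℕ)) : Prop :=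
  PInv h st.1 ∧
    ∀ p, st.2 = some p → 0 < p.2 → ∀ m < n, lexKey p < lexKey (st.1 m (h m p.1))

lemma cinv_step (h : ℕ → ID → Idx) (n : ℕ)
    (st : (ℕ → Idx → ID × ℕ) × Option (ID × ℕ)) (hst : CInv h n st) :
    CInv h (n + 1) (lexStep h n st) := by
  obtain ⟨T, c⟩ := st
  obtain ⟨hP, hC⟩ := hst
  cases c with
  | none =>
    refine ⟨hP, ?_⟩
    intro p hp
    simp [lexStep] at hp
  | some p =>
    have hP : PInv h T := hP
    have hCp : 0 < p.2 → ∀ m < n, lexKey p < lexKey (T m (h m p.1)) := hC p rfl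
    show CInv h (n+1)
      (if (T n (h n p.1)).2 < p.2 ∨ ((T n (h n p.1)).2 = p.2 ∧ (T n (h n p.1)).1 < p.1) then
        ((fun i j => if i = n ∧ j = h n p.1 then p else T i j), some (T n (h n p.1)))
      else if T n (h n p.1) = p then (T, none)
      else (T, some p))
    by_cases h1 : (T n (h n p.1)).2 < p.2 ∨ ((T n (h n p.1)).2 = p.2 ∧ (T n (h n p.1)).1 < p.1)
    · rw [if_pos h1]
      have hsp : lexKey (T n (h n p.1)) < lexKey p := lexKey_lt_iff.mpr h1
      set T' : ℕ → Idx → ID × ℕ := fun i j => if i = n ∧ j = h n p.1 then p else T i j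
        with hT'
      have hT'ne : ∀ i j, ¬(i = n ∧ j = h n p.1) → T' i j = T i j := by
        intro i j hij; simp [hT', hij]
      have hT'eq : T' n (h n p.1) = p := by simp [hT']
      have hP' : PInv h T' := by
        intro m j hpos
        by_cases hmj : m = n ∧ j = h n p.1
        · obtain ⟨hm, hj⟩ := hmj
          subst hm; subst hj
          rw [hT'eq] at hpos ⊢
          refine ⟨rfl, fun r hr => ?_⟩
          rw [hT'ne r (h r p.1) (by intro hc; omega)]
          exact hCp hpos r hr
        · rw [hT'ne m j hmj] at hpos ⊢
          obtain ⟨hj, hpath⟩ := hP m j hpos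
          refine ⟨hj, fun r hr => ?_⟩
          by_cases hrj : r = n ∧ h r (T m j).1 = h n p.1
          · have hlt := hpath r hr
            rw [hrj.2, hrj.1] at hlt
            rw [hrj.2, hrj.1, hT'eq]
            exact lt_trans hlt hsp
          · rw [hT'ne r _ hrj]
            exact hpath r hr
      refine ⟨hP', ?_⟩
      intro q hq hqpos m hm
      have hq' : q = T n (h n p.1) :=
        (Option.some.inj (show some (T n (h n p.1)) = some q from hq)).symm
      subst hq'
      obtain ⟨hslot, hpath⟩ := hP n (h n p.1) hqpos
      show lexKey (T n (h n p.1)) < lexKey (T' m (h m (T n (h n p.1)).1))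
      rcases Nat.lt_succ_iff_lt_or_eq.mp hm with hm' | hm'
      · rw [hT'ne m _ (by intro hc; omega)]
        exact hpath m hm'
      · rw [hm', ← hslot, hT'eq]
        exact hsp
    · rw [if_neg h1]
      by_cases h2 : T n (h n p.1) = p
      · rw [if_pos h2]
        refine ⟨hP, ?_⟩
        intro q hq
        simp at hq
      · rw [if_neg h2]
        refine ⟨hP, ?_⟩
        intro q hq hqpos m hm
        have hq' : q = p := (Option.some.inj (show some p = some q from hq)).symm
        rw [hq'] at hqpos
        show lexKey q < lexKey (T m (h m q.1))
        rw [hq']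
        rcases Nat.lt_succ_iff_lt_or_eq.mp hm with hm' | hm'
        · exact hCp hqpos m hm'
        · rw [hm']
          have hle : lexKey p ≤ lexKey (T n (h n p.1)) :=
            not_lt.mp (fun hc => h1 (lexKey_lt_iff.mp hc))
          exact lt_of_le_of_ne hle (fun he => h2 ((lexKey_inj he).symm))

lemma cinv_run (h : ℕ → ID → Idx) (T : ℕ → Idx → ID × ℕ) (p : ID × ℕ)
    (hP : PInv h T) : ∀ n, CInv h n (lexRun h T p n)
  | 0 => ⟨hP, fun q _ _ m hm => absurd hm (Nat.not_lt_zero m)⟩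
  | n + 1 => cinv_step h n _ (cinv_run h T p hP n)

lemma pinv_insert (h : ℕ → ID → Idx) (d : ℕ) (T : ℕ → Idx → ID × ℕ) (p : ID × ℕ)
    (hP : PInv h T) : PInv h (lexInsert h d T p) :=
  (cinv_run h T p hP d).1

lemma pinv_after (h : ℕ → ID → Idx) (d : ℕ) (T₀ : ℕ → Idx → ID × ℕ)
    (l : List (ID × ℕ)) (hP : PInv h T₀) : PInv h (lexTableAfter h d T₀ l) := by
  induction l generalizing T₀ with
  | nil => exact hP
  | cons p l ih =>
    have hstep : lexTableAfter h d T₀ (p :: l) = lexTableAfter h d (lexInsert h d T₀ p) l := rfl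
    rw [hstep]
    exact ih _ (pinv_insert h d T₀ p hP)

end LexProof

/-- starting from an all-zero table, after processing any finite packet
sequence, no `(ID, count)` pair with positive count appears in two distinct positions
of the table. -/
theorem no_duplicate_pairs {ID Idx : Type} [LinearOrder ID] [DecidableEq Idx]
    (h : ℕ → ID → Idx) (d : ℕ) (T₀ : ℕ → Idx → ID × ℕ)
    (hT₀ : ∀ i j, (T₀ i j).2 = 0) (l : List (ID × ℕ))
    (i₁ i₂ : ℕ) (hi₁ : i₁ < d) (hi₂ : i₂ < d) (j₁ j₂ : Idx)
    (hne : (i₁, j₁) ≠ (i₂, j₂))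
    (hpos₁ : 0 < ((lexTableAfter h d T₀ l) i₁ j₁).2)
    (hpos₂ : 0 < ((lexTableAfter h d T₀ l) i₂ j₂).2) :
    (lexTableAfter h d T₀ l) i₁ j₁ ≠ (lexTableAfter h d T₀ l) i₂ j₂ := by
  have hP0 : PInv h T₀ := by
    intro m j hpos
    rw [hT₀ m j] at hpos
    exact absurd hpos (lt_irrefl 0)
  have hP := pinv_after h d T₀ l hP0
  set T := lexTableAfter h d T₀ l with hT
  intro heq
  obtain ⟨hj₁, hpath₁⟩ := hP i₁ j₁ hpos₁
  obtain ⟨hj₂, hpath₂⟩ := hP i₂ j₂ hpos₂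
  have hid : (T i₁ j₁).1 = (T i₂ j₂).1 := by rw [heq]
  rcases lt_trichotomy i₁ i₂ with hlt | heqi | hgt
  · have hc := hpath₂ i₁ hlt
    rw [← hid, ← hj₁, ← heq] at hc
    exact absurd hc (lt_irrefl _)
  · subst heqi
    have hj : j₁ = j₂ := by rw [hj₁, hj₂, hid]
    exact hne (by rw [hj])
  · have hc := hpath₁ i₂ hgt
    rw [hid, ← hj₂, heq] at hc
    exact absurd hc (lt_irrefl _)
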